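/- Let u : ∂𝔻 → ℝ be measurable with ‖u‖_∞ < π/(2p) for some 1 ≤ p < ∞, and let Hu denote its Hilbert transform (the boundary-value harmonic conjugate normalized so that (Hu)-extension vanishes at 0). Then e^{Hu} ∈ L^p(∂𝔻) with ‖e^{Hu}‖_p ≤ (2π/cos(p·‖u‖_∞))^{1/p} (Zygmund's inequality). -/

import Mathlib

open Complex MeasureTheory Filter

lemma zyg_mean (G : ℂ → ℂ) (hGd : DifferentiableOn ℂ G (Metric.ball (0:ℂ) 1))
    {r : ℝ} (hr0 : 0 < r) (hr1 : r < 1) :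
    (∫ θ in (0:ℝ)..(2*Real.pi), G ((r:ℂ) * Complex.exp (θ * Complex.I)))
      = ((2 * Real.pi : ℝ) : ℂ) * G 0 := by
  have hc : ContinuousOn G (Metric.closedBall (0:ℂ) r) :=
    hGd.continuousOn.mono (Metric.closedBall_subset_ball hr1)
  have hd : ∀ z ∈ Metric.ball (0:ℂ) r \ (∅ : Set ℂ), DifferentiableAt ℂ G z := fun z hz =>
    hGd.differentiableAt (Metric.isOpen_ball.mem_nhds (Metric.ball_subset_ball hr1.le hz.1))
  have key := Complex.circleIntegral_sub_center_inv_smul_of_differentiable_on_off_countable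
    hr0 Set.countable_empty hc hd
  rw [circleIntegral] at key
  simp only [smul_eq_mul, deriv_circleMap, sub_zero] at key
  have hkey2 : (∫ θ in (0:ℝ)..(2*Real.pi),
      circleMap 0 r θ * I * ((circleMap 0 r θ)⁻¹ * G (circleMap 0 r θ)))
      = ∫ θ in (0:ℝ)..(2*Real.pi), I * G (circleMap 0 r θ) := by
    apply intervalIntegral.integral_congr
    intro θ _
    have hne : circleMap 0 r θ ≠ 0 := circleMap_ne_center hr0.ne'
    field_simp
  rw [hkey2, intervalIntegral.integral_const_mul] at key
  have key3 : I * (∫ θ in (0:ℝ)..(2*Real.pi), G (circleMap 0 r θ))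
      = I * (((2 * Real.pi : ℝ) : ℂ) * G 0) := by
    rw [key]; push_cast; ring
  have key4 := mul_left_cancel₀ Complex.I_ne_zero key3
  rw [← key4]
  apply intervalIntegral.integral_congr
  intro θ _
  simp [circleMap_zero]

lemma zyg_cos_bound {p M x : ℝ} (hp0 : 0 < p) (hpM : p * M < Real.pi / 2)
    (hx : |x| ≤ M) : Real.cos (p * M) ≤ Real.cos (p * x) := by
  rw [← Real.cos_abs (p * x)]
  apply Real.cos_le_cos_of_nonneg_of_le_pi (abs_nonneg _)
  · linarith [Real.pi_pos]
  · rw [abs_mul, _root_.abs_of_pos hp0]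
    exact mul_le_mul_of_nonneg_left hx hp0.le

set_option maxHeartbeats 800000 in
/-- Zygmund's inequality: if `‖u‖_∞ ≤ M < π/(2p)` and `Hu` is the boundary value of the
harmonic conjugate (normalized to vanish at `0`) of the bounded harmonic extension of `u`,
then `‖e^{Hu}‖_p ≤ (2π / cos(p M))^{1/p}`. The harmonic extension is encoded by a
holomorphic function `F` on the disc with `Im F 0 = 0`, `|Re F| ≤ M`, whose real and
imaginary parts have radial boundary values `u` and `Hu` almost everywhere. -/
theorem stmt_13 (p M : ℝ) (hp : 1 ≤ p) (hM : 0 ≤ M) (hMp : M < Real.pi / (2 * p))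
    (u Hu : ℝ → ℝ) (hu : ∀ θ : ℝ, |u θ| ≤ M)
    (F : ℂ → ℂ)
    (hFd : DifferentiableOn ℂ F (Metric.ball (0:ℂ) 1))
    (hF0 : (F 0).im = 0)
    (hFbd : ∀ z ∈ Metric.ball (0:ℂ) 1, |(F z).re| ≤ M)
    (hbdry : ∀ᵐ θ : ℝ ∂volume,
      Tendsto (fun r : ℝ => (F ((r : ℂ) * Complex.exp (θ * Complex.I))).re)
          (nhdsWithin 1 (Set.Iio 1)) (nhds (u θ)) ∧
      Tendsto (fun r : ℝ => (F ((r : ℂ) * Complex.exp (θ * Complex.I))).im)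
          (nhdsWithin 1 (Set.Iio 1)) (nhds (Hu θ))) :
    IntegrableOn (fun θ : ℝ => Real.exp (Hu θ) ^ p) (Set.Ioc 0 (2 * Real.pi)) volume ∧
    (∫ θ in Set.Ioc (0:ℝ) (2 * Real.pi), Real.exp (Hu θ) ^ p) ^ (1/p) ≤
      (2 * Real.pi / Real.cos (p * M)) ^ (1/p) := by
  have hp0 : 0 < p := lt_of_lt_of_le one_pos hp
  have hpM : p * M < Real.pi / 2 := by
    have h2 := (lt_div_iff₀ (by positivity : (0:ℝ) < 2 * p)).mp hMp
    nlinarith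
  have hcos : 0 < Real.cos (p * M) := by
    apply Real.cos_pos_of_mem_Ioo
    constructor
    · nlinarith [Real.pi_pos, mul_nonneg hp0.le hM]
    · exact hpM
  -- the auxiliary holomorphic function
  set G : ℂ → ℂ := fun z => Complex.exp (-(p:ℂ) * I * F z) with hGdef
  have hGd : DifferentiableOn ℂ G (Metric.ball 0 1) := (hFd.const_mul _).cexp
  have hReG : ∀ z : ℂ, (G z).re = Real.exp (p * (F z).im) * Real.cos (p * (F z).re) := by
    intro z
    have h1 : (-(p:ℂ) * I * F z).re = p * (F z).im := by simp
    have h2 : (-(p:ℂ) * I * F z).im = -(p * (F z).re) := by simp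
    rw [hGdef]
    simp only [Complex.exp_re, h1, h2, Real.cos_neg]
  -- membership of circle points in the ball
  have hmem : ∀ (r : ℝ), 0 ≤ r → r < 1 → ∀ θ : ℝ,
      ((r:ℂ) * Complex.exp (θ * I)) ∈ Metric.ball (0:ℂ) 1 := by
    intro r hr0 hr1 θ
    rw [Metric.mem_ball, Complex.dist_eq, sub_zero, norm_mul, Complex.norm_exp_ofReal_mul_I,
      mul_one, Complex.norm_of_nonneg hr0]
    exact hr1
  -- the approximating radii
  set rs : ℕ → ℝ := fun n => 1 - 1/(n+2 : ℝ) with hrs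
  have hrs_mem : ∀ n, rs n ∈ Set.Ioo (0:ℝ) 1 := by
    intro n
    have h2 : (0:ℝ) < (n:ℝ) + 2 := by positivity
    constructor
    · have : 1/((n:ℝ)+2) ≤ 1/2 := by
        apply one_div_le_one_div_of_le <;> [norm_num; linarith [Nat.cast_nonneg (α := ℝ) n]]
      simp only [hrs]; linarith
    · simp only [hrs]
      have : 0 < 1/((n:ℝ)+2) := by positivity
      linarith
  have hrs_tendsto : Tendsto rs atTop (nhdsWithin 1 (Set.Iio 1)) := by
    rw [tendsto_nhdsWithin_iff]
    constructor
    · have h1 : Tendsto (fun n : ℕ => 1/((n:ℝ)+2)) atTop (nhds 0) := by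
        simp only [one_div]
        exact (tendsto_atTop_add_const_right atTop 2
          tendsto_natCast_atTop_atTop).inv_tendsto_atTop
      have h2 := (tendsto_const_nhds (x := (1:ℝ)) (f := atTop (α := ℕ))).sub h1
      simp only [hrs]
      simpa using h2
    · exact Eventually.of_forall fun n => (hrs_mem n).2
  -- continuity of the circle maps
  have hcontmap : ∀ r : ℝ, Continuous (fun θ : ℝ => (r:ℂ) * Complex.exp (θ * I)) := by
    intro r
    exact continuous_const.mul (Complex.continuous_exp.comp
      (Complex.continuous_ofReal.mul continuous_const))
  have hGcont : ∀ n, Continuous (fun θ : ℝ => G ((rs n : ℂ) * Complex.exp (θ * I))) := by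
    intro n
    exact hGd.continuousOn.comp_continuous (hcontmap _)
      (fun θ => hmem _ (hrs_mem n).1.le (hrs_mem n).2 θ)
  -- each slice function and its nonnegativity
  set f : ℕ → ℝ → ℝ := fun n θ => (G ((rs n : ℂ) * Complex.exp (θ * I))).re with hfdef
  have hf_nonneg : ∀ n θ, 0 ≤ f n θ := by
    intro n θ
    rw [hfdef]
    simp only [hReG]
    apply mul_nonneg (Real.exp_pos _).le
    exact le_trans hcos.le
      (zyg_cos_bound hp0 hpM (hFbd _ (hmem _ (hrs_mem n).1.le (hrs_mem n).2 θ)))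
  -- mean value of each slice
  have hG0 : (G 0).re ≤ 1 := by
    rw [hReG, hF0, mul_zero, Real.exp_zero, one_mul]
    exact Real.cos_le_one _
  have hG0' : 0 ≤ (G 0).re := by
    rw [hReG, hF0, mul_zero, Real.exp_zero, one_mul]
    exact le_trans hcos.le (zyg_cos_bound hp0 hpM (hFbd 0 (by simp [Metric.mem_ball])))
  have hmean : ∀ n, ∫ θ in Set.Ioc (0:ℝ) (2*Real.pi), f n θ = 2 * Real.pi * (G 0).re := by
    intro n
    have h2pi : (0:ℝ) ≤ 2 * Real.pi := by positivity
    have hIc := zyg_mean G hGd (hrs_mem n).1 (hrs_mem n).2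
    have hint : IntegrableOn (fun θ : ℝ => G ((rs n : ℂ) * Complex.exp (θ * I)))
        (Set.Ioc 0 (2*Real.pi)) volume := (hGcont n).integrableOn_Ioc
    rw [intervalIntegral.integral_of_le h2pi] at hIc
    have := integral_re hint
    rw [hIc] at this
    rw [hfdef]
    simpa using this
  -- a.e. convergence of the slices to the boundary values
  have hconv : ∀ᵐ θ : ℝ ∂volume, Tendsto (fun n => f n θ) atTop
      (nhds (Real.exp (p * Hu θ) * Real.cos (p * u θ))) := by
    filter_upwards [hbdry] with θ hθ
    have h1 : Tendsto (fun n => (F ((rs n : ℂ) * Complex.exp (θ * I))).re) atTop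
        (nhds (u θ)) := hθ.1.comp hrs_tendsto
    have h2 : Tendsto (fun n => (F ((rs n : ℂ) * Complex.exp (θ * I))).im) atTop
        (nhds (Hu θ)) := hθ.2.comp hrs_tendsto
    have h3 := ((Real.continuous_exp.tendsto _).comp (h2.const_mul p)).mul
      ((Real.continuous_cos.tendsto _).comp (h1.const_mul p))
    simpa [hfdef, hReG, Function.comp] using h3
  have hFcont : ∀ n : ℕ, Continuous fun θ : ℝ => (F ((rs n : ℂ) * Complex.exp (θ * I))).im := by
    intro n
    exact Complex.continuous_im.comp (hFd.continuousOn.comp_continuous (hcontmap (rs n))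
      (fun θ => hmem _ (hrs_mem n).1.le (hrs_mem n).2 θ))
  have hHu_aem : AEMeasurable Hu volume := by
    refine aemeasurable_of_tendsto_metrizable_ae atTop
      (fun n => (hFcont n).aemeasurable) ?_
    filter_upwards [hbdry] with θ hθ
    exact hθ.2.comp hrs_tendsto
  set μ := volume.restrict (Set.Ioc (0:ℝ) (2*Real.pi)) with hμ
  -- Fatou's lemma
  have hFatou := lintegral_liminf_le (μ := μ) (u := atTop)
    (f := fun n θ => ENNReal.ofReal (f n θ))
    (fun n => (Complex.continuous_re.comp (hGcont n)).measurable.ennreal_ofReal)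
  have hRHS : Filter.liminf (fun n => ∫⁻ θ, ENNReal.ofReal (f n θ) ∂μ) atTop
      ≤ ENNReal.ofReal (2 * Real.pi) := by
    have hev : ∀ n, ∫⁻ θ, ENNReal.ofReal (f n θ) ∂μ ≤ ENNReal.ofReal (2 * Real.pi) := by
      intro n
      have hfint : Integrable (f n) μ :=
        (Complex.continuous_re.comp (hGcont n)).integrableOn_Ioc
      rw [← ofReal_integral_eq_lintegral_ofReal hfint (Eventually.of_forall (hf_nonneg n))]
      apply ENNReal.ofReal_le_ofReal
      calc ∫ θ, f n θ ∂μ = 2*Real.pi*(G 0).re := hmean n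
        _ ≤ 2*Real.pi := by nlinarith [Real.pi_pos]
    refine le_trans (Filter.liminf_le_liminf (Eventually.of_forall hev)) ?_
    simp [Filter.liminf_const]
  have hbd_ae : ∀ᵐ θ ∂μ, Filter.liminf (fun n => ENNReal.ofReal (f n θ)) atTop
      = ENNReal.ofReal (Real.exp (p * Hu θ) * Real.cos (p * u θ)) := by
    filter_upwards [ae_restrict_of_ae hconv] with θ hθ
    exact ((ENNReal.continuous_ofReal.tendsto _).comp hθ).liminf_eq
  have hmain : ∫⁻ θ, ENNReal.ofReal (Real.exp (p * Hu θ) * Real.cos (p * u θ)) ∂μ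
      ≤ ENNReal.ofReal (2 * Real.pi) := by
    calc ∫⁻ θ, ENNReal.ofReal (Real.exp (p * Hu θ) * Real.cos (p * u θ)) ∂μ
        = ∫⁻ θ, Filter.liminf (fun n => ENNReal.ofReal (f n θ)) atTop ∂μ :=
          lintegral_congr_ae (hbd_ae.mono fun θ h => h.symm)
      _ ≤ _ := le_trans hFatou hRHS
  -- pointwise domination by the positive-cosine bound
  have hptwise : ∀ θ : ℝ, ENNReal.ofReal (Real.exp (p * Hu θ))
      ≤ ENNReal.ofReal (Real.cos (p*M))⁻¹
        * ENNReal.ofReal (Real.exp (p * Hu θ) * Real.cos (p * u θ)) := by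
    intro θ
    rw [← ENNReal.ofReal_mul (by positivity)]
    apply ENNReal.ofReal_le_ofReal
    rw [← div_eq_inv_mul, le_div_iff₀ hcos]
    exact mul_le_mul_of_nonneg_left (zyg_cos_bound hp0 hpM (hu θ)) (Real.exp_pos _).le
  have hexp_lint : ∫⁻ θ, ENNReal.ofReal (Real.exp (p * Hu θ)) ∂μ
      ≤ ENNReal.ofReal (2 * Real.pi / Real.cos (p*M)) := by
    calc ∫⁻ θ, ENNReal.ofReal (Real.exp (p * Hu θ)) ∂μ
        ≤ ∫⁻ θ, ENNReal.ofReal (Real.cos (p*M))⁻¹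
            * ENNReal.ofReal (Real.exp (p * Hu θ) * Real.cos (p * u θ)) ∂μ :=
          lintegral_mono hptwise
      _ = ENNReal.ofReal (Real.cos (p*M))⁻¹
            * ∫⁻ θ, ENNReal.ofReal (Real.exp (p * Hu θ) * Real.cos (p * u θ)) ∂μ :=
          lintegral_const_mul' _ _ ENNReal.ofReal_ne_top
      _ ≤ ENNReal.ofReal (Real.cos (p*M))⁻¹ * ENNReal.ofReal (2 * Real.pi) :=
          by gcongr
      _ = ENNReal.ofReal (2 * Real.pi / Real.cos (p*M)) := by
          rw [← ENNReal.ofReal_mul (by positivity), ← div_eq_inv_mul]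
  -- measurability and integrability of the target function
  have hmeas : AEStronglyMeasurable (fun θ : ℝ => Real.exp (p * Hu θ)) μ :=
    ((Real.measurable_exp.comp_aemeasurable
      (hHu_aem.const_mul p)).restrict).aestronglyMeasurable
  have hInt : IntegrableOn (fun θ : ℝ => Real.exp (p * Hu θ)) (Set.Ioc 0 (2*Real.pi)) volume := by
    refine ⟨hmeas, ?_⟩
    rw [hasFiniteIntegral_iff_ofReal (Eventually.of_forall fun θ => (Real.exp_pos _).le)]
    exact lt_of_le_of_lt hexp_lint ENNReal.ofReal_lt_top
  have hIntval : (∫ θ, Real.exp (p * Hu θ) ∂μ) ≤ 2 * Real.pi / Real.cos (p*M) := by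
    rw [integral_eq_lintegral_of_nonneg_ae
      (Eventually.of_forall fun θ => (Real.exp_pos _).le) hmeas]
    rw [← ENNReal.toReal_ofReal (le_of_lt (by positivity : (0:ℝ) < 2*Real.pi/Real.cos (p*M)))]
    exact ENNReal.toReal_mono ENNReal.ofReal_ne_top hexp_lint
  have hfun : (fun θ : ℝ => Real.exp (Hu θ) ^ p) = fun θ : ℝ => Real.exp (p * Hu θ) := by
    funext θ
    rw [← Real.exp_mul, mul_comm]
  rw [hfun]
  refine ⟨hInt, ?_⟩
  apply Real.rpow_le_rpow _ hIntval (by positivity)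
  exact setIntegral_nonneg measurableSet_Ioc fun θ _ => (Real.exp_pos _).le
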